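/- The function g : (0,∞) → ℝ defined by g(k) := √(k·tanh(k)) − k is strictly decreasing on (0,∞) and strictly concave on (0,∞). -/

import Mathlib

open Real Set

/-- The first derivative of `k ↦ √(k tanh k) − k`. -/
noncomputable def whithamGd (k : ℝ) : ℝ :=
  (Real.tanh k + k * (1 - Real.tanh k ^ 2)) / (2 * Real.sqrt (k * Real.tanh k)) - 1

lemma hasDerivAt_tanh'' (x : ℝ) : HasDerivAt Real.tanh (1 - Real.tanh x ^ 2) x := by
  have hc : Real.cosh x ≠ 0 := (Real.cosh_pos x).ne'
  have h := (Real.hasDerivAt_sinh x).div (Real.hasDerivAt_cosh x) hc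
  have hfun : Real.tanh = fun y => Real.sinh y / Real.cosh y :=
    funext fun y => Real.tanh_eq_sinh_div_cosh y
  rw [hfun]
  refine h.congr_deriv ?_
  beta_reduce
  rw [div_pow]
  field_simp

lemma tanh_pos' {x : ℝ} (hx : 0 < x) : 0 < Real.tanh x := by
  rw [Real.tanh_eq_sinh_div_cosh]
  exact div_pos (by rwa [Real.sinh_pos_iff]) (Real.cosh_pos x)

lemma tanh_lt_one' (x : ℝ) : Real.tanh x < 1 := by
  rw [Real.tanh_eq_sinh_div_cosh, div_lt_one (Real.cosh_pos x)]
  rw [Real.sinh_eq, Real.cosh_eq]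
  have := Real.exp_pos (-x)
  linarith

lemma tanh_lt_self' {x : ℝ} (hx : 0 < x) : Real.tanh x < x := by
  have key := strictMonoOn_of_deriv_pos (convex_Ici (0:ℝ))
      (Continuous.continuousOn (by continuity)) (f := fun w => w * Real.cosh w - Real.sinh w)
      (fun w hw => by
        rw [interior_Ici] at hw
        have hw' : 0 < w := hw
        have hd : HasDerivAt (fun w => w * Real.cosh w - Real.sinh w)
            ((1 * Real.cosh w + w * Real.sinh w) - Real.cosh w) w :=
          ((hasDerivAt_id w).mul (Real.hasDerivAt_cosh w)).sub (Real.hasDerivAt_sinh w)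
        rw [hd.deriv]
        have hs : 0 < Real.sinh w := Real.sinh_pos_iff.mpr hw'
        nlinarith [mul_pos hw' hs])
  have h0 := key (Set.mem_Ici.mpr le_rfl) (Set.mem_Ici.mpr hx.le) hx
  simp only [Real.cosh_zero, Real.sinh_zero, mul_one, zero_mul, sub_zero, zero_sub] at h0
  rw [Real.tanh_eq_sinh_div_cosh, div_lt_iff₀ (Real.cosh_pos x)]
  linarith

/-- Key transcendental inequality, equivalent to `e^{4x} > 1 + 4x`. -/
lemma whitham_key_ineq {x : ℝ} (hx : 0 < x) : x * (1 - Real.tanh x)^2 < Real.tanh x := by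
  set a := Real.exp x with ha_def
  set b := Real.exp (-x) with hb_def
  have ha : (0:ℝ) < a := Real.exp_pos x
  have hb : (0:ℝ) < b := Real.exp_pos (-x)
  have hab : a * b = 1 := by rw [ha_def, hb_def, ← Real.exp_add]; simp
  have hexp : 4 * x + 1 < a ^ 4 := by
    have := Real.add_one_lt_exp (show 4*x ≠ 0 by positivity)
    have h4 : Real.exp (4 * x) = a ^ 4 := by
      rw [show (4:ℝ)*x = x+x+x+x by ring, Real.exp_add, Real.exp_add, Real.exp_add]; ring
    linarith [h4 ▸ this]
  have hkey : 4 * x * b^2 < a^2 - b^2 := by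
    have h5 : (4*x+1) * b^2 < a^4 * b^2 := mul_lt_mul_of_pos_right hexp (by positivity)
    have h6 : a^4 * b^2 = a^2 := by
      have : a^4 * b^2 = a^2 * (a*b)^2 := by ring
      rw [this, hab]; ring
    nlinarith [sq_nonneg b]
  have hC : (0:ℝ) < a + b := by linarith
  rw [Real.tanh_eq_sinh_div_cosh, Real.sinh_eq, Real.cosh_eq, ← ha_def, ← hb_def]
  have hdiv : (a - b)/2/((a + b)/2) = (a - b)/(a + b) := by
    field_simp
  rw [hdiv]
  have h7 : 1 - (a-b)/(a+b) = 2*b/(a+b) := by field_simp; ring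
  rw [h7]
  have h8 : x * (2*b/(a+b))^2 = (4*x*b^2)/(a+b)^2 := by rw [div_pow]; field_simp; ring
  rw [h8, div_lt_div_iff₀ (by positivity) hC]
  nlinarith [mul_lt_mul_of_pos_right hkey hC]

/-- `g' = whithamGd` on `(0,∞)`. -/
lemma whitham_hasDerivAt {k : ℝ} (hk : 0 < k) :
    HasDerivAt (fun x => Real.sqrt (x * Real.tanh x) - x) (whithamGd k) k := by
  have ht : 0 < Real.tanh k := tanh_pos' hk
  have hkt : 0 < k * Real.tanh k := mul_pos hk ht
  have hH : HasDerivAt (fun x => x * Real.tanh x)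
      (1 * Real.tanh k + k * (1 - Real.tanh k ^ 2)) k :=
    (hasDerivAt_id k).mul (hasDerivAt_tanh'' k)
  have hsq := (Real.hasDerivAt_sqrt hkt.ne').comp k hH
  have h2 := hsq.sub (hasDerivAt_id k)
  refine h2.congr_deriv ?_
  rw [whithamGd]
  field_simp

/-- The first derivative is negative on `(0,∞)`. -/
lemma whithamGd_neg {k : ℝ} (hk : 0 < k) : whithamGd k < 0 := by
  have ht : 0 < Real.tanh k := tanh_pos' hk
  have ht1 : Real.tanh k < 1 := tanh_lt_one' k
  have htk : Real.tanh k < k := tanh_lt_self' hk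
  have hkt : 0 < k * Real.tanh k := mul_pos hk ht
  have hs : 0 < Real.sqrt (k * Real.tanh k) := Real.sqrt_pos.mpr hkt
  have hs2 : Real.sqrt (k * Real.tanh k) ^ 2 = k * Real.tanh k := Real.sq_sqrt hkt.le
  set t := Real.tanh k
  set N := t + k * (1 - t ^ 2) with hN_def
  have hNpos : 0 < N := by nlinarith
  have hfac1 : 0 < t - k * (1 - t)^2 := by
    have := whitham_key_ineq hk
    linarith
  have hfac2 : 0 < k * (1 + t)^2 - t := by nlinarith
  have hNsq : N ^ 2 < (2 * Real.sqrt (k * t)) ^ 2 := by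
    have hid : 4 * (k * t) - N^2 = (t - k * (1 - t)^2) * (k * (1 + t)^2 - t) := by
      rw [hN_def]; ring
    have : (2 * Real.sqrt (k * t)) ^ 2 = 4 * (k * t) := by
      rw [mul_pow, hs2]; ring
    rw [this]
    nlinarith [mul_pos hfac1 hfac2]
  have hNlt : N < 2 * Real.sqrt (k * t) :=
    lt_of_pow_lt_pow_left₀ 2 (by positivity) hNsq
  rw [whithamGd, sub_neg]
  rw [div_lt_one (by positivity)]
  exact hNlt

/-- The second derivative is negative on `(0,∞)`. -/
lemma whithamGd_deriv_neg {k : ℝ} (hk : 0 < k) :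
    ∃ v, HasDerivAt whithamGd v k ∧ v < 0 := by
  have ht : 0 < Real.tanh k := tanh_pos' hk
  have ht1 : Real.tanh k < 1 := tanh_lt_one' k
  have hkt : 0 < k * Real.tanh k := mul_pos hk ht
  have hs : 0 < Real.sqrt (k * Real.tanh k) := Real.sqrt_pos.mpr hkt
  have hs2 : Real.sqrt (k * Real.tanh k) ^ 2 = k * Real.tanh k := Real.sq_sqrt hkt.le
  have hH : HasDerivAt (fun x => x * Real.tanh x)
      (1 * Real.tanh k + k * (1 - Real.tanh k ^ 2)) k :=
    (hasDerivAt_id k).mul (hasDerivAt_tanh'' k)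
  have hsq := (Real.hasDerivAt_sqrt hkt.ne').comp k hH
  have hN : HasDerivAt (fun x => Real.tanh x + x * (1 - Real.tanh x ^ 2))
      ((1 - Real.tanh k ^ 2) + (1 * (1 - Real.tanh k ^ 2) +
        k * (-(2 * Real.tanh k ^ 1 * (1 - Real.tanh k ^ 2))))) k :=
    (hasDerivAt_tanh'' k).add ((hasDerivAt_id k).mul
      (((hasDerivAt_tanh'' k).pow 2).const_sub 1))
  have hD : HasDerivAt (fun x => 2 * Real.sqrt (x * Real.tanh x))
      (2 * (1 / (2 * Real.sqrt (k * Real.tanh k)) *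
        (1 * Real.tanh k + k * (1 - Real.tanh k ^ 2)))) k := hsq.const_mul 2
  have hDne : (2 * Real.sqrt (k * Real.tanh k)) ≠ 0 := by positivity
  have hGd := (hN.div hD hDne).sub_const 1
  refine ⟨_, hGd, ?_⟩
  -- now show the value is negative
  set t := Real.tanh k
  set s := Real.sqrt (k * t)
  set nd := (1 - t ^ 2) + (1 * (1 - t ^ 2) + k * (-(2 * t ^ 1 * (1 - t ^ 2)))) with hnd_def
  set N := t + k * (1 - t ^ 2) with hN_def
  have hnum : nd * (2 * s) - N * (2 * (1 / (2 * s) * (1 * t + k * (1 - t ^ 2))))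
      = (2 * nd * s ^ 2 - N ^ 2) / s := by
    field_simp
    ring
  have hkey : 2 * nd * s ^ 2 - N ^ 2 < 0 := by
    rw [hs2]
    have hid : N ^ 2 - 2 * nd * (k * t)
        = (t - k * (1 - t^2))^2 + 4 * k^2 * t^2 * (1 - t^2) := by
      rw [hN_def, hnd_def]; ring
    nlinarith [sq_nonneg (t - k * (1 - t^2)), mul_pos (mul_pos (mul_pos hk hk) (mul_pos ht ht))
      (show (0:ℝ) < 1 - t^2 by nlinarith)]
  calc (nd * (2 * s) - N * (2 * (1 / (2 * s) * (1 * t + k * (1 - t ^ 2))))) / (2 * s) ^ 2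
      = ((2 * nd * s ^ 2 - N ^ 2) / s) / (2 * s) ^ 2 := by rw [hnum]
    _ < 0 := by
        apply div_neg_of_neg_of_pos _ (by positivity)
        exact div_neg_of_neg_of_pos hkey hs

/-- The function `g(k) = √(k·tanh k) − k = k(m(k) − 1)`, where `m` is the Whitham
dispersion symbol, is strictly decreasing and strictly concave on `(0,∞)`. -/
theorem stmt_15 (g : ℝ → ℝ)
    (hg : ∀ k : ℝ, g k = Real.sqrt (k * Real.tanh k) - k) :
    StrictAntiOn g (Set.Ioi (0 : ℝ)) ∧ StrictConcaveOn ℝ (Set.Ioi (0 : ℝ)) g := by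
  have hgfun : g = fun x => Real.sqrt (x * Real.tanh x) - x := funext hg
  subst hgfun
  have hcont : ContinuousOn (fun x => Real.sqrt (x * Real.tanh x) - x) (Set.Ioi (0:ℝ)) := by
    apply Continuous.continuousOn
    have htanh : Continuous Real.tanh :=
      continuous_iff_continuousAt.mpr fun x => (hasDerivAt_tanh'' x).continuousAt
    exact (Real.continuous_sqrt.comp (continuous_id.mul htanh)).sub continuous_id
  have hderiv : ∀ x ∈ Set.Ioi (0:ℝ),
      deriv (fun x => Real.sqrt (x * Real.tanh x) - x) x = whithamGd x :=
    fun x hx => (whitham_hasDerivAt hx).deriv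
  constructor
  · apply strictAntiOn_of_deriv_neg (convex_Ioi 0) hcont
    intro x hx
    rw [interior_Ioi] at hx
    rw [hderiv x hx]
    exact whithamGd_neg hx
  · apply strictConcaveOn_of_deriv2_neg (convex_Ioi 0) hcont
    intro x hx
    rw [interior_Ioi] at hx
    have hev : deriv (fun x => Real.sqrt (x * Real.tanh x) - x) =ᶠ[nhds x] whithamGd := by
      filter_upwards [Ioi_mem_nhds (show (0:ℝ) < x from hx)] with y hy
      exact hderiv y hy
    obtain ⟨v, hv, hvneg⟩ := whithamGd_deriv_neg hx
    have : deriv (deriv (fun x => Real.sqrt (x * Real.tanh x) - x)) x = v := by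
      rw [hev.deriv_eq, hv.deriv]
    simpa [this] using hvneg
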